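/- On ℝ³ with the degenerate Poisson structure given by the constant matrix Π with Π₁₂ = 1 = −Π₂₁ and all other entries zero, Liouville vector field D(x) = (x₁, 0, x₃), and the ℝ⁺-action Φ_s(x) = (s(x₁+1)−1, x₂, s x₃), the function J(x) = x₂ is a conformal momentum map of degree 1 (i.e., ξ_M = Π∇(ξJ) + ξD for all ξ ∈ ℝ), but J is not a Casimir since Π∇J = (1,0,0) ≠ 0. -/

import Mathlib

lemma fderiv_coord_mul (c : ℝ) (x v : Fin 3 → ℝ) :
    (fderiv ℝ (fun y : Fin 3 → ℝ => c * y 1) x) v = c * v 1 := by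
  have h : (fun y : Fin 3 → ℝ => c * y 1)
      = fun y => c • (ContinuousLinearMap.proj (R := ℝ) (φ := fun _ : Fin 3 => ℝ) 1) y := by
    rfl
  rw [h, fderiv_fun_const_smul ((ContinuousLinearMap.proj (R := ℝ) (φ := fun _ : Fin 3 => ℝ) 1)).differentiableAt c]
  simp [ContinuousLinearMap.fderiv]

/-!
STATEMENT 3. On `ℝ³` with the constant degenerate Poisson matrix
`Π = [[0,1,0],[-1,0,0],[0,0,0]]`, Liouville vector field `D(x) = (x₁, 0, x₃)` and
`ℝ⁺`-action `Φ_s(x) = (s(x₁+1) - 1, x₂, s x₃)`, the function `J(x) = x₂` is a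
conformal momentum map of degree 1, i.e. `ξ_M = Π ∇(ξ J) + ξ D` for all `ξ ∈ ℝ`,
but `J` is not a Casimir: `Π ∇J = (1,0,0) ≠ 0`.

Here the gradient is the vector of coordinate partial derivatives,
`(∇f)(x)_i = (fderiv ℝ f x) (Pi.single i 1)`, and `ξ_M(x) = ξ • (x₁+1, 0, x₃)`
is the infinitesimal generator of the action.
-/
theorem stmt_3 :
    let grad : ((Fin 3 → ℝ) → ℝ) → (Fin 3 → ℝ) → (Fin 3 → ℝ) :=
      fun f x i => (fderiv ℝ f x) (Pi.single i 1)
    let Pi' : Matrix (Fin 3) (Fin 3) ℝ := !![0, 1, 0; -1, 0, 0; 0, 0, 0]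
    let J : (Fin 3 → ℝ) → ℝ := fun x => x 1
    let D : (Fin 3 → ℝ) → (Fin 3 → ℝ) := fun x => ![x 0, 0, x 2]
    -- J is a conformal momentum map of degree 1: ξ_M = Π ∇(ξJ) + ξ D
    (∀ (ξ : ℝ) (x : Fin 3 → ℝ),
        (ξ • ![x 0 + 1, 0, x 2] : Fin 3 → ℝ)
          = Pi'.mulVec (grad (fun y => ξ * J y) x) + ξ • D x) ∧
    -- but J is not a Casimir: Π ∇J = (1,0,0) ≠ 0
    (∀ x : Fin 3 → ℝ, Pi'.mulVec (grad J x) = ![1, 0, 0]) ∧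
    (![1, 0, 0] : Fin 3 → ℝ) ≠ 0 := by
  intro grad Pi' J D
  have hg : ∀ (c : ℝ) (x : Fin 3 → ℝ), grad (fun y => c * J y) x = ![0, c, 0] := by
    intro c x
    funext i
    simp only [grad, J, fderiv_coord_mul]
    fin_cases i <;> simp [Pi.single_apply]
  have hgJ : ∀ x : Fin 3 → ℝ, grad J x = ![0, 1, 0] := by
    intro x
    have := hg 1 x
    simpa [J, grad] using this
  refine ⟨?_, ?_, ?_⟩
  · intro ξ x
    rw [hg]
    funext i
    fin_cases i <;> simp [Pi', D, Matrix.mulVec, dotProduct, Fin.sum_univ_three] <;> ring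
  · intro x
    rw [hgJ]
    funext i
    fin_cases i <;> simp [Pi', Matrix.mulVec, dotProduct, Fin.sum_univ_three]
  · intro h
    have := congrFun h 0
    simp at this
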